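/- Let K be a finite dimensional metrizable Choquet simplex with exactly d ≥ 1 extreme points (i.e., a (d−1)-dimensional simplex), let (p_n)_{n≥0} be an increasing sequence of positive integers with p_n | p_{n+1}, and let k ≥ max{2,d}. Then there exist an increasing subsequence (n_i)_{i≥0} and a sequence (M_i)_{i≥0} of k×k positive integer matrices managed by (p_{n_i})_{i≥0} such that K is affinely homeomorphic to the inverse limit lim← (Δ(k, p_{n_i}), M_i). -/

import Mathlib

/-- The simplex `Δ(k,p) = {v ∈ (ℝ⁺)^k : Σ v_i = 1/p}`. -/
def simplexSet (k : ℕ) (p : ℕ) : Set (Fin k → ℝ) :=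
  {v | (∀ i, 0 ≤ v i) ∧ (∑ i, v i) = 1 / (p : ℝ)}

/-- The sequence of positive integer matrices `(M n)` is managed by the
increasing sequence `(p n)`. -/
def IsManaged (p : ℕ → ℕ) (k : ℕ → ℕ)
    (M : ∀ n, Matrix (Fin (k n)) (Fin (k (n + 1))) ℤ) : Prop :=
  (∀ n, 0 < p n) ∧ StrictMono p ∧ (∀ n, p n ∣ p (n + 1)) ∧
  (∀ n, 2 ≤ k n) ∧ (∀ n i j, 0 < M n i j) ∧
  (∀ n j, (∑ i, M n i j) * (p n : ℤ) = (p (n + 1) : ℤ))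

/-- The sets `S ⊆ E` and `T ⊆ F` are affinely homeomorphic. -/
def AffinelyHomeomorphic {E F : Type*}
    [AddCommGroup E] [Module ℝ E] [TopologicalSpace E]
    [AddCommGroup F] [Module ℝ F] [TopologicalSpace F]
    (S : Set E) (T : Set F) : Prop :=
  ∃ f : S ≃ₜ T, ∀ (x y z : S) (t : ℝ), 0 ≤ t → t ≤ 1 →
    (z : E) = t • (x : E) + (1 - t) • (y : E) →
    (f z : F) = t • (f x : F) + (1 - t) • (f y : F)

set_option linter.unusedSectionVars false

namespace Stmt13aux

open Finset

noncomputable section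

variable (q : ℕ → ℕ) (k : ℕ)

/-- `a i = q(i+1)/q i - k`, the diagonal surplus. -/
def aN (i : ℕ) : ℕ := q (i+1) / q i - k

def PP (i j : ℕ) : ℝ := ∏ l ∈ Finset.range j, (aN q k (i+l) : ℝ)

def term (i j : ℕ) : ℝ := PP q k i j / (q (i+j+1) : ℝ)

def uF (i : ℕ) : ℝ := ∑' j : ℕ, term q k i j

def sF (i : ℕ) : ℝ := 1 / (q i : ℝ) - k * uF q k i

variable (hq0 : ∀ i, 0 < q i) (hdvd : ∀ i, q i ∣ q (i+1))
  (hm : ∀ i, 2^(i+2) * k ≤ q (i+1) / q i) (hk : 2 ≤ k)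

section
include hq0 hdvd hm hk

lemma k_le_m (i : ℕ) : k ≤ q (i+1) / q i := by
  calc k = 1 * k := (one_mul k).symm
  _ ≤ 2^(i+2) * k := Nat.mul_le_mul_right k (Nat.one_le_two_pow)
  _ ≤ _ := hm i

lemma a_pos (i : ℕ) : 0 < aN q k i := by
  have h1 := hm i
  have h2 : 2^2 * k ≤ 2^(i+2) * k := Nat.mul_le_mul_right k
    (Nat.pow_le_pow_right (by norm_num) (by omega))
  have h3 : 2^2 * k = 4 * k := by norm_num
  unfold aN; omega

lemma hmq (i : ℕ) : (q (i+1) / q i) * q i = q (i+1) := Nat.div_mul_cancel (hdvd i)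

lemma qreal (i : ℕ) : (q (i+1) : ℝ) = ((q (i+1) / q i : ℕ) : ℝ) * (q i : ℝ) := by
  rw [← Nat.cast_mul, hmq q k hq0 hdvd hm hk]

lemma aAddK (i : ℕ) : (aN q k i : ℝ) + k = ((q (i+1) / q i : ℕ) : ℝ) := by
  have := k_le_m q k hq0 hdvd hm hk i
  unfold aN
  push_cast [Nat.cast_sub this]
  ring

lemma prodm (i j : ℕ) :
    (q i : ℝ) * ∏ l ∈ Finset.range j, ((q (i+l+1) / q (i+l) : ℕ) : ℝ) = q (i+j) := by
  induction j with
  | zero => simp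
  | succ j ih =>
    rw [Finset.prod_range_succ, ← mul_assoc, ih, mul_comm,
      ← qreal q k hq0 hdvd hm hk (i+j)]
    rfl

lemma term_nonneg (i j : ℕ) : 0 ≤ term q k i j := by
  unfold term PP
  positivity

lemma term_le (i j : ℕ) :
    term q k i j ≤ (1 / ((q i : ℝ) * k) * (1/2)^(i+2)) * (1/2)^j := by
  have hqpos : ∀ n, (0:ℝ) < q n := fun n => by exact_mod_cast hq0 n
  have hkpos : (0:ℝ) < k := by exact_mod_cast (by omega : 0 < k)
  have hstep1 : term q k i j ≤ 1 / ((q i : ℝ) * ((q (i+j+1) / q (i+j) : ℕ) : ℝ)) := by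
    have hmpos : (0:ℝ) < ((q (i+j+1) / q (i+j) : ℕ) : ℝ) := by
      have := k_le_m q k hq0 hdvd hm hk (i+j)
      exact_mod_cast (by omega : 0 < q (i+j+1)/q (i+j))
    have h1 : PP q k i j ≤ ∏ l ∈ Finset.range j, ((q (i+l+1) / q (i+l) : ℕ) : ℝ) := by
      apply Finset.prod_le_prod
      · intro l _; positivity
      · intro l _
        exact_mod_cast Nat.sub_le _ _
    have e1 : (q (i+j+1) : ℝ) =
        (q i : ℝ) * ((∏ l ∈ Finset.range j, ((q (i+l+1) / q (i+l) : ℕ) : ℝ)) *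
          ((q (i+j+1) / q (i+j) : ℕ) : ℝ)) := by
      rw [← Finset.prod_range_succ (fun l => ((q (i+l+1) / q (i+l) : ℕ) : ℝ)) j,
        prodm q k hq0 hdvd hm hk i (j+1)]
      rfl
    rw [term, div_le_div_iff₀ (hqpos _) (mul_pos (hqpos i) hmpos)]
    rw [e1]
    nlinarith [mul_le_mul_of_nonneg_left h1 (le_of_lt (mul_pos (hqpos i) hmpos))]
  calc term q k i j ≤ 1 / ((q i : ℝ) * ((q (i+j+1) / q (i+j) : ℕ) : ℝ)) := hstep1
    _ ≤ 1 / ((q i : ℝ) * ((2:ℝ)^(i+j+2) * k)) := by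
        apply one_div_le_one_div_of_le
        · exact mul_pos (hqpos i) (mul_pos (by positivity) hkpos)
        · apply mul_le_mul_of_nonneg_left _ (le_of_lt (hqpos i))
          exact_mod_cast hm (i+j)
    _ = (1 / ((q i : ℝ) * k) * (1/2)^(i+2)) * (1/2)^j := by
        rw [div_pow, div_pow, one_pow, one_pow]
        rw [show (2:ℝ)^(i+j+2) = 2^(i+2) * 2^j by rw [← pow_add]; ring_nf]
        field_simp

lemma summable_term (i : ℕ) : Summable (term q k i) := by
  apply Summable.of_nonneg_of_le (term_nonneg q k hq0 hdvd hm hk i)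
    (term_le q k hq0 hdvd hm hk i)
  exact (summable_geometric_of_lt_one (by norm_num) (by norm_num)).mul_left _

lemma u_nonneg (i : ℕ) : 0 ≤ uF q k i :=
  tsum_nonneg (term_nonneg q k hq0 hdvd hm hk i)

lemma ku_le (i : ℕ) : (k:ℝ) * uF q k i ≤ (1/2)^(i+1) / (q i : ℝ) := by
  have hqpos : (0:ℝ) < q i := by exact_mod_cast hq0 i
  have hkpos : (0:ℝ) < k := by exact_mod_cast (by omega : 0 < k)
  have h1 : uF q k i ≤ (1 / ((q i : ℝ) * k) * (1/2)^(i+2)) * 2 := by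
    have h := Summable.tsum_le_tsum (term_le q k hq0 hdvd hm hk i)
      (summable_term q k hq0 hdvd hm hk i)
      ((summable_geometric_of_lt_one (by norm_num) (by norm_num)).mul_left _)
    rw [tsum_mul_left, tsum_geometric_of_lt_one (by norm_num) (by norm_num)] at h
    rw [show ((1:ℝ) - 1/2)⁻¹ = 2 by norm_num] at h
    exact h
  have h2 : (k:ℝ) * ((1 / ((q i : ℝ) * k) * (1/2)^(i+2)) * 2) = (1/2)^(i+1) / (q i : ℝ) := by
    rw [pow_succ]
    field_simp
  nlinarith [h1, hkpos]

lemma u_rec (i : ℕ) :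
    uF q k i = (aN q k i : ℝ) * uF q k (i+1) + 1 / (q (i+1) : ℝ) := by
  have hs := summable_term q k hq0 hdvd hm hk i
  have h0 : uF q k i = term q k i 0 + ∑' j, term q k i (j+1) := Summable.tsum_eq_zero_add hs
  have ht0 : term q k i 0 = 1 / (q (i+1) : ℝ) := by
    unfold term PP; simp
  have hshift : ∀ j, term q k i (j+1) = (aN q k i : ℝ) * term q k (i+1) j := by
    intro j
    unfold term PP
    rw [Finset.prod_range_succ' (fun l => (aN q k (i+l) : ℝ)) j]
    rw [show i + (j+1) + 1 = (i+1) + j + 1 from by omega]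
    have hpc : ∏ l ∈ Finset.range j, (aN q k (i+(l+1)) : ℝ)
        = ∏ l ∈ Finset.range j, (aN q k ((i+1)+l) : ℝ) := by
      apply Finset.prod_congr rfl
      intro l _
      rw [show i + (l+1) = (i+1) + l from by omega]
    rw [hpc]
    rw [mul_comm, mul_div_assoc]
    norm_num
  rw [h0, ht0, tsum_congr hshift, tsum_mul_left]
  exact add_comm _ _

lemma s_rec (i : ℕ) : sF q k i = (aN q k i : ℝ) * sF q k (i+1) := by
  have hqpos : ∀ n, (0:ℝ) < q n := fun n => by exact_mod_cast hq0 n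
  have hmpos : (0:ℝ) < ((q (i+1) / q i : ℕ) : ℝ) := by
    have := k_le_m q k hq0 hdvd hm hk i
    exact_mod_cast (by omega : 0 < q (i+1)/q i)
  have key : (1:ℝ) / q i = ((aN q k i : ℝ) + k) / (q (i+1) : ℝ) := by
    rw [aAddK q k hq0 hdvd hm hk i, qreal q k hq0 hdvd hm hk i]
    have hqne : (q i : ℝ) ≠ 0 := ne_of_gt (hqpos i)
    have hmne : ((q (i+1) / q i : ℕ) : ℝ) ≠ 0 := ne_of_gt hmpos
    field_simp
  unfold sF
  rw [u_rec q k hq0 hdvd hm hk i, key]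
  ring

lemma s_lb (i : ℕ) : (1/2) / (q i : ℝ) ≤ sF q k i := by
  have hqpos : (0:ℝ) < q i := by exact_mod_cast hq0 i
  have h1 := ku_le q k hq0 hdvd hm hk i
  have h2 : ((1:ℝ)/2)^(i+1) ≤ (1/2)^1 :=
    pow_le_pow_of_le_one (by norm_num) (by norm_num) (by omega)
  have h3 : ((1:ℝ)/2)^(i+1) / (q i : ℝ) ≤ (1/2) / (q i : ℝ) := by
    gcongr
    simpa using h2
  have h4 : (1:ℝ)/2/(q i : ℝ) + 1/2/(q i : ℝ) = 1/(q i : ℝ) := by ring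
  unfold sF
  linarith

lemma s_pos (i : ℕ) : 0 < sF q k i := by
  have hqpos : (0:ℝ) < q i := by exact_mod_cast hq0 i
  have h := s_lb q k hq0 hdvd hm hk i
  have h2 : (0:ℝ) < 1/2/(q i : ℝ) := by positivity
  linarith

end
end
end Stmt13aux

namespace Geo

open Finset

/-- `σ(j) = min(j, d-1)`. -/
def sig (d : ℕ) {k : ℕ} (j : Fin k) : Fin k :=
  ⟨min j.1 (d-1), lt_of_le_of_lt (min_le_left _ _) j.2⟩

lemma sig_le (d : ℕ) {k : ℕ} (j : Fin k) : (sig d j).1 ≤ d - 1 := min_le_right _ _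

lemma Esum {k d : ℕ} (hd : 1 ≤ d) (w : Fin k → ℝ)
    (hw : ∀ j : Fin k, d ≤ j.1 → w j = 0) (t : Fin k) :
    ∑ j, (if sig d j = t then w j else 0) = w t := by
  rcases lt_trichotomy (t.1) (d-1) with h | h | h
  · rw [Finset.sum_congr rfl (fun j _ => ?_), Finset.sum_ite_eq' Finset.univ t w,
      if_pos (Finset.mem_univ t)]
    by_cases hj : j = t
    · subst hj
      rw [if_pos, if_pos rfl]
      apply Fin.ext
      simp only [sig]
      omega
    · rw [if_neg hj, if_neg]
      intro hc
      apply hj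
      apply Fin.ext
      have := congrArg Fin.val hc
      simp only [sig] at this
      omega
  · rw [Finset.sum_congr rfl (fun j _ => ?_), Finset.sum_ite_eq' Finset.univ t w,
      if_pos (Finset.mem_univ t)]
    by_cases hj : j = t
    · subst hj
      rw [if_pos, if_pos rfl]
      apply Fin.ext
      simp only [sig]
      omega
    · rw [if_neg hj]
      by_cases hc : sig d j = t
      · rw [if_pos hc]
        apply hw
        have := congrArg Fin.val hc
        simp only [sig] at this
        have hjt : j.1 ≠ t.1 := fun he => hj (Fin.ext he)
        omega
      · rw [if_neg hc]
  · rw [Finset.sum_eq_zero, Eq.comm]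
    · apply hw
      omega
    · intro j _
      rw [if_neg]
      intro hc
      have := congrArg Fin.val hc
      have := sig_le d j
      omega

/-- The vector `r`. -/
noncomputable def rv (d : ℕ) {k : ℕ} (t : Fin k) : ℝ :=
  ∑ j, (if sig d j = t then (1:ℝ) else 0)

lemma rv_nonneg (d : ℕ) {k : ℕ} (t : Fin k) : 0 ≤ rv d t := by
  apply Finset.sum_nonneg
  intro j _
  split <;> norm_num

lemma rv_le (d : ℕ) {k : ℕ} (t : Fin k) : rv d t ≤ k := by
  calc rv d t ≤ ∑ _j : Fin k, (1:ℝ) := by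
        apply Finset.sum_le_sum
        intro j _
        split <;> norm_num
  _ = k := by simp

lemma rv_zero (d : ℕ) (hd : 1 ≤ d) {k : ℕ} (t : Fin k) (ht : d ≤ t.1) : rv d t = 0 := by
  apply Finset.sum_eq_zero
  intro j _
  rw [if_neg]
  intro hc
  have := congrArg Fin.val hc
  have := sig_le d j
  omega

lemma Erv {k d : ℕ} (hd : 1 ≤ d) (t : Fin k) :
    ∑ j, (if sig d j = t then rv d j else 0) = rv d t :=
  Esum hd (rv d) (rv_zero d hd) t

lemma sum_rv (d : ℕ) {k : ℕ} : ∑ t : Fin k, rv d t = k := by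
  unfold rv
  rw [Finset.sum_comm]
  have : ∀ j : Fin k, ∑ t : Fin k, (if sig d j = t then (1:ℝ) else 0) = 1 := by
    intro j
    rw [Finset.sum_ite_eq Finset.univ (sig d j) (fun _ => (1:ℝ)),
      if_pos (Finset.mem_univ _)]
  rw [Finset.sum_congr rfl (fun j _ => this j)]
  simp

/-- Extension of a vector on `Fin d` to `Fin k` by zero. -/
def extD {k : ℕ} (d : ℕ) (x : Fin d → ℝ) (t : Fin k) : ℝ :=
  if h : t.1 < d then x ⟨t.1, h⟩ else 0

lemma extD_zero {k d : ℕ} (x : Fin d → ℝ) (t : Fin k) (ht : d ≤ t.1) : extD d x t = 0 :=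
  dif_neg (by omega)

lemma extD_nonneg {k d : ℕ} (x : Fin d → ℝ) (hx : ∀ i, 0 ≤ x i) (t : Fin k) :
    0 ≤ extD d x t := by
  unfold extD
  split
  · apply hx
  · exact le_refl 0

lemma EextD {k d : ℕ} (hd : 1 ≤ d) (x : Fin d → ℝ) (t : Fin k) :
    ∑ j, (if sig d j = t then extD d x j else 0) = extD d x t :=
  Esum hd (extD d x) (extD_zero x) t

lemma sum_extD {k d : ℕ} (hdk : d ≤ k) (x : Fin d → ℝ) :
    ∑ t : Fin k, extD d x t = ∑ t : Fin d, x t := by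
  have hg : ∀ n : ℕ, extD (k := k) d x = extD d x := fun _ => rfl
  rw [show (∑ t : Fin k, extD d x t) =
      ∑ n ∈ Finset.range k, (if h : n < d then x ⟨n, h⟩ else 0) from
    Fin.sum_univ_eq_sum_range (fun n => if h : n < d then x ⟨n, h⟩ else 0) k]
  rw [← Finset.sum_subset (Finset.range_subset_range.2 hdk)
    (fun n _ hn => dif_neg (by simpa using hn))]
  rw [← Fin.sum_univ_eq_sum_range (fun n => if h : n < d then x ⟨n, h⟩ else 0) d]
  apply Finset.sum_congr rfl
  intro t _
  rw [dif_pos t.2]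

end Geo

namespace Stmt13main

open Stmt13aux Geo Finset

/-- The chosen subsequence of indices. -/
def niF (k : ℕ) : ℕ → ℕ
  | 0 => 0
  | i + 1 => niF k i + (i + 2 + k)

/-- The forward map on simplices. -/
noncomputable def vf (q : ℕ → ℕ) (k d : ℕ) (x : Fin d → ℝ) (i : ℕ) (t : Fin k) : ℝ :=
  sF q k i * extD d x t + (aN q k i : ℝ) * uF q k (i+1) * rv d t + 1/(q (i+1) : ℝ)

/-- The candidate inverse data. -/
noncomputable def zk (q : ℕ → ℕ) (k d : ℕ) (v : ℕ → Fin k → ℝ) (t : Fin k) : ℝ :=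
  ((∑ j, if sig d j = t then v 0 j else 0) - uF q k 0 * rv d t) / sF q k 0

lemma extD_restrict {k d : ℕ} (hkd : d ≤ k) (w : Fin k → ℝ)
    (hw : ∀ t : Fin k, d ≤ t.1 → w t = 0) :
    extD d (fun t : Fin d => w ⟨t.1, lt_of_lt_of_le t.2 hkd⟩) = w := by
  funext t
  unfold extD
  split
  · congr 1
  · exact (hw t (by omega)).symm

end Stmt13main

open Stmt13aux Geo Stmt13main Finset

theorem stmt13 (d : ℕ) (hd : 1 ≤ d) (p : ℕ → ℕ)
    (hp0 : ∀ n, 0 < p n) (hpmono : StrictMono p) (hpdvd : ∀ n, p n ∣ p (n + 1))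
    (k : ℕ) (hk2 : 2 ≤ k) (hkd : d ≤ k) :
    ∃ (ni : ℕ → ℕ) (M : ℕ → Matrix (Fin k) (Fin k) ℤ),
      StrictMono ni ∧
      IsManaged (fun i => p (ni i)) (fun _ => k) M ∧
      AffinelyHomeomorphic (simplexSet d 1)
        {v : ℕ → (Fin k → ℝ) |
          (∀ i, v i ∈ simplexSet k (p (ni i))) ∧
          ∀ i, v i = ((M i).map (Int.cast : ℤ → ℝ)).mulVec (v (i + 1))} := by
  classical
  -- basic facts about `p`
  have hp2 : ∀ n, 2 * p n ≤ p (n+1) := by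
    intro n
    obtain ⟨t, ht⟩ := hpdvd n
    have h1 : p n < p (n+1) := hpmono (Nat.lt_succ_self n)
    have h0 := hp0 n
    rcases Nat.lt_or_ge t 2 with h | h
    · interval_cases t <;> omega
    · calc 2 * p n = p n * 2 := by ring
        _ ≤ p n * t := Nat.mul_le_mul_left _ h
        _ = p (n+1) := ht.symm
  have hdvdc : ∀ n c, p n ∣ p (n+c) := by
    intro n c
    induction c with
    | zero => exact dvd_refl _
    | succ c ih => exact dvd_trans ih (hpdvd (n+c))
  have hlec : ∀ n c, 2^c * p n ≤ p (n+c) := by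
    intro n c
    induction c with
    | zero => simp
    | succ c ih =>
      calc 2^(c+1) * p n = 2 * (2^c * p n) := by ring
        _ ≤ 2 * p (n+c) := Nat.mul_le_mul_left _ ih
        _ ≤ p (n+c+1) := hp2 (n+c)
  -- the subsequence
  set q : ℕ → ℕ := fun i => p (niF k i) with hqd
  have hnistep : ∀ i, niF k (i+1) = niF k i + (i+2+k) := fun i => rfl
  have hnimono : StrictMono (niF k) :=
    strictMono_nat_of_lt_succ (fun i => by rw [hnistep]; omega)
  have hq0 : ∀ i, 0 < q i := fun i => hp0 _
  have hqdvd : ∀ i, q i ∣ q (i+1) := fun i => hdvdc (niF k i) (i+2+k)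
  have hmge : ∀ i, 2^(i+2) * k ≤ q (i+1) / q i := by
    intro i
    have h1 : 2^(i+2+k) * q i ≤ q (i+1) := hlec (niF k i) (i+2+k)
    have h2 : (q (i+1) / q i) * q i = q (i+1) := Nat.div_mul_cancel (hqdvd i)
    have h3 : 2^(i+2+k) ≤ q (i+1)/q i := by
      apply Nat.le_of_mul_le_mul_right _ (hq0 i)
      rw [h2]
      exact h1
    calc 2^(i+2)*k ≤ 2^(i+2)*2^k :=
          Nat.mul_le_mul_left _ (Nat.le_of_lt (Nat.lt_two_pow_self (n := k)))
      _ = 2^(i+2+k) := (pow_add 2 _ _).symm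
      _ ≤ q (i+1)/q i := h3
  -- instantiated analysis facts
  have hsrec : ∀ i, sF q k i = (aN q k i : ℝ) * sF q k (i+1) :=
    s_rec q k hq0 hqdvd hmge hk2
  have hurec : ∀ i, uF q k i = (aN q k i : ℝ) * uF q k (i+1) + 1 / (q (i+1) : ℝ) :=
    u_rec q k hq0 hqdvd hmge hk2
  have hspos : ∀ i, 0 < sF q k i := s_pos q k hq0 hqdvd hmge hk2
  have hslb : ∀ i, (1/2) / (q i : ℝ) ≤ sF q k i := s_lb q k hq0 hqdvd hmge hk2
  have hku : ∀ i, (k:ℝ) * uF q k i ≤ (1/2)^(i+1) / (q i : ℝ) :=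
    ku_le q k hq0 hqdvd hmge hk2
  have hunn : ∀ i, 0 ≤ uF q k i := u_nonneg q k hq0 hqdvd hmge hk2
  have hann : ∀ i, (0:ℝ) ≤ (aN q k i : ℝ) := fun i => Nat.cast_nonneg _
  have hapos : ∀ i, (0:ℝ) < (aN q k i : ℝ) := fun i => by
    exact_mod_cast a_pos q k hq0 hqdvd hmge hk2 i
  have hqrpos : ∀ i, (0:ℝ) < (q i : ℝ) := fun i => by exact_mod_cast hq0 i
  -- the matrices
  set M : ℕ → Matrix (Fin k) (Fin k) ℤ :=
    (fun i => Matrix.of fun t j => if sig d j = t then ((aN q k i : ℤ) + 1) else 1)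
    with hM
  -- column sums
  have hcolsum : ∀ n (j : Fin k), (∑ t : Fin k, M n t j) = (aN q k n : ℤ) + k := by
    intro n j
    have h1 : ∀ t : Fin k, M n t j
        = (if sig d j = t then (aN q k n : ℤ) else 0) + 1 := by
      intro t
      simp only [hM, Matrix.of_apply]
      split <;> ring
    rw [Finset.sum_congr rfl (fun t _ => h1 t), Finset.sum_add_distrib,
      Finset.sum_ite_eq Finset.univ (sig d j) (fun _ => (aN q k n : ℤ)),
      if_pos (Finset.mem_univ _)]
    simp [Finset.card_univ, mul_comm]
  -- mulVec computation
  have hmulvec : ∀ n (w : Fin k → ℝ) (t : Fin k),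
      (((M n).map (Int.cast : ℤ → ℝ)).mulVec w) t
        = (aN q k n : ℝ) * (∑ j, if sig d j = t then w j else 0) + ∑ j, w j := by
    intro n w t
    simp only [Matrix.mulVec, dotProduct, Matrix.map_apply, hM, Matrix.of_apply]
    rw [Finset.mul_sum, ← Finset.sum_add_distrib]
    apply Finset.sum_congr rfl
    intro j _
    by_cases hc : sig d j = t
    · rw [if_pos hc, if_pos hc]
      push_cast
      ring
    · rw [if_neg hc, if_neg hc]
      push_cast
      ring
  -- sum of coordinates of vf
  have hsumw : ∀ (x : Fin d → ℝ), (∑ t, x t = 1) → ∀ i,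
      ∑ j : Fin k, vf q k d x i j = 1 / (q i : ℝ) := by
    intro x hx1 i
    unfold vf
    rw [Finset.sum_add_distrib, Finset.sum_add_distrib, ← Finset.mul_sum,
      ← Finset.mul_sum, sum_extD hkd, hx1, sum_rv, Finset.sum_const,
      Finset.card_univ, Fintype.card_fin, nsmul_eq_mul]
    have hs_eq : sF q k i = 1/(q i : ℝ) - k * uF q k i := rfl
    rw [hs_eq, hurec i]
    ring
  -- the E-computation on vf
  have hEvf : ∀ (x : Fin d → ℝ) i (t : Fin k),
      (∑ j, if sig d j = t then vf q k d x i j else 0)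
        = sF q k i * extD d x t + uF q k i * rv d t := by
    intro x i t
    have hsplit : ∀ j : Fin k, (if sig d j = t then vf q k d x i j else 0)
        = sF q k i * (if sig d j = t then extD d x j else 0)
          + (aN q k i : ℝ) * uF q k (i+1) * (if sig d j = t then rv d j else 0)
          + (1/(q (i+1) : ℝ)) * (if sig d j = t then 1 else 0) := by
      intro j
      by_cases hc : sig d j = t
      · simp only [if_pos hc, vf]
        ring
      · simp only [if_neg hc]
        ring
    rw [Finset.sum_congr rfl (fun j _ => hsplit j), Finset.sum_add_distrib,
      Finset.sum_add_distrib, ← Finset.mul_sum, ← Finset.mul_sum, ← Finset.mul_sum,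
      EextD hd, Erv hd]
    have hrv : (∑ j, if sig d j = t then (1:ℝ) else 0) = rv d t := rfl
    rw [hrv, hurec i]
    ring
  -- forward membership
  have hvfmem : ∀ (x : Fin d → ℝ), (∀ t, 0 ≤ x t) → (∑ t, x t = 1) → ∀ i,
      vf q k d x i ∈ simplexSet k (q i) := by
    intro x hx0 hx1 i
    constructor
    · intro t
      unfold vf
      have h1 : 0 ≤ sF q k i * extD d x t :=
        mul_nonneg (le_of_lt (hspos i)) (extD_nonneg x hx0 t)
      have h2 : 0 ≤ (aN q k i : ℝ) * uF q k (i+1) * rv d t :=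
        mul_nonneg (mul_nonneg (hann i) (hunn (i+1))) (rv_nonneg d t)
      have h3 : (0:ℝ) ≤ 1/(q (i+1) : ℝ) := by positivity
      linarith
    · exact hsumw x hx1 i
  -- forward intertwining
  have hvfstep : ∀ (x : Fin d → ℝ), (∑ t, x t = 1) → ∀ i,
      vf q k d x i = ((M i).map (Int.cast : ℤ → ℝ)).mulVec (vf q k d x (i+1)) := by
    intro x hx1 i
    funext t
    rw [hmulvec, hEvf, hsumw x hx1 (i+1)]
    show vf q k d x i t = _
    unfold vf
    rw [hsrec i]
    ring
  -- backward: every element of the limit is in the image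
  have hback : ∀ v : ℕ → Fin k → ℝ,
      (∀ i, v i ∈ simplexSet k (q i)) →
      (∀ i, v i = ((M i).map (Int.cast : ℤ → ℝ)).mulVec (v (i+1))) →
      (∀ t, 0 ≤ zk q k d v t) ∧ (∑ t : Fin k, zk q k d v t = 1) ∧
      (∀ t : Fin k, d ≤ t.1 → zk q k d v t = 0) ∧
      (∀ i t, v i t = sF q k i * zk q k d v t
        + (aN q k i : ℝ) * uF q k (i+1) * rv d t + 1/(q (i+1) : ℝ)) := by
    intro v hv1 hv2
    set y : ℕ → Fin k → ℝ := fun i t => ∑ j, if sig d j = t then v i j else 0 with hy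
    have hsumv : ∀ i, ∑ j, v i j = 1/(q i : ℝ) := fun i => (hv1 i).2
    have hvy : ∀ i t, v i t = (aN q k i : ℝ) * y (i+1) t + 1/(q (i+1) : ℝ) := by
      intro i t
      conv_lhs => rw [hv2 i]
      rw [hmulvec, hsumv (i+1)]
    have hy0 : ∀ i (t : Fin k), d ≤ t.1 → y i t = 0 := by
      intro i t ht
      apply Finset.sum_eq_zero
      intro j _
      rw [if_neg]
      intro hc
      have h1 := congrArg Fin.val hc
      have h2 := sig_le d j
      omega
    have hyrec : ∀ i t, y i t
        = (aN q k i : ℝ) * y (i+1) t + (1/(q (i+1) : ℝ)) * rv d t := by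
      intro i t
      have h1 : y i t = ∑ j, if sig d j = t
          then ((aN q k i : ℝ) * y (i+1) j + 1/(q (i+1) : ℝ)) else 0 := by
        apply Finset.sum_congr rfl
        intro j _
        by_cases hc : sig d j = t
        · rw [if_pos hc, if_pos hc, hvy i j]
        · rw [if_neg hc, if_neg hc]
      have h2 : ∀ j : Fin k, (if sig d j = t
          then ((aN q k i : ℝ) * y (i+1) j + 1/(q (i+1) : ℝ)) else 0)
          = (aN q k i : ℝ) * (if sig d j = t then y (i+1) j else 0)
            + (1/(q (i+1) : ℝ)) * (if sig d j = t then 1 else 0) := by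
        intro j
        by_cases hc : sig d j = t
        · rw [if_pos hc, if_pos hc, if_pos hc]
          ring
        · rw [if_neg hc, if_neg hc, if_neg hc]
          ring
      rw [h1, Finset.sum_congr rfl (fun j _ => h2 j), Finset.sum_add_distrib,
        ← Finset.mul_sum, ← Finset.mul_sum,
        Esum hd (y (i+1)) (hy0 (i+1)) t]
      rfl
    have hyz : ∀ i t, y i t = sF q k i * zk q k d v t + uF q k i * rv d t := by
      intro i t
      induction i with
      | zero =>
        unfold zk
        have h0 : y 0 t = ∑ j, if sig d j = t then v 0 j else 0 := rfl
        rw [← h0, mul_comm (sF q k 0), div_mul_cancel₀ _ (ne_of_gt (hspos 0))]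
        ring
      | succ i ih =>
        have ha := hapos i
        apply mul_left_cancel₀ (ne_of_gt ha)
        have e1 : (aN q k i : ℝ) * y (i+1) t = y i t - (1/(q (i+1) : ℝ)) * rv d t := by
          rw [hyrec i t]
          ring
        rw [e1, ih, hsrec i, hurec i]
        ring
    -- nonnegativity of z
    have hznn : ∀ t, 0 ≤ zk q k d v t := by
      intro t
      by_contra hneg
      push_neg at hneg
      obtain ⟨i, hi⟩ := exists_pow_lt_of_lt_one (show (0:ℝ) < -zk q k d v t by linarith)
        (show (1:ℝ)/2 < 1 by norm_num)
      have hy_nn : 0 ≤ y i t := by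
        apply Finset.sum_nonneg
        intro j _
        split
        · exact (hv1 i).1 j
        · exact le_refl 0
      have hurle : uF q k i * rv d t ≤ (k:ℝ) * uF q k i := by
        rw [mul_comm (k:ℝ) (uF q k i)]
        exact mul_le_mul_of_nonneg_left (rv_le d t) (hunn i)
      have h2 : sF q k i * (-zk q k d v t) ≤ (1/2)^(i+1) / (q i : ℝ) := by
        have h1 : sF q k i * zk q k d v t = y i t - uF q k i * rv d t := by
          rw [hyz i t]; ring
        nlinarith [hku i]
      have h3 : (1/2)/(q i : ℝ) * (-zk q k d v t) ≤ sF q k i * (-zk q k d v t) :=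
        mul_le_mul_of_nonneg_right (hslb i) (by linarith)
      have h4 : -zk q k d v t ≤ (1/2)^i := by
        have h5 := le_trans h3 h2
        rw [div_mul_eq_mul_div, div_le_div_iff₀ (hqrpos i) (hqrpos i)] at h5
        have hps : ((1:ℝ)/2)^(i+1) = (1/2)^i * (1/2) := pow_succ _ _
        nlinarith [hqrpos i]
      linarith
    -- sum of z
    have hy0sum : ∑ t : Fin k, y 0 t = 1/(q 0 : ℝ) := by
      have h1 : ∑ t : Fin k, y 0 t
          = ∑ j : Fin k, ∑ t : Fin k, (if sig d j = t then v 0 j else 0) :=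
        Finset.sum_comm
      rw [h1]
      have h2 : ∀ j : Fin k, ∑ t : Fin k, (if sig d j = t then v 0 j else 0) = v 0 j := by
        intro j
        rw [Finset.sum_ite_eq Finset.univ (sig d j) (fun _ => v 0 j),
          if_pos (Finset.mem_univ _)]
      rw [Finset.sum_congr rfl (fun j _ => h2 j)]
      exact hsumv 0
    have hzsum : ∑ t : Fin k, zk q k d v t = 1 := by
      have h1 : ∑ t : Fin k, zk q k d v t
          = (∑ t : Fin k, (y 0 t - uF q k 0 * rv d t)) / sF q k 0 := by
        rw [Finset.sum_div]
        apply Finset.sum_congr rfl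
        intro t _
        rfl
      rw [h1, Finset.sum_sub_distrib, ← Finset.mul_sum, sum_rv, hy0sum]
      rw [div_eq_one_iff_eq (ne_of_gt (hspos 0))]
      have hs_eq : sF q k 0 = 1/(q 0 : ℝ) - k * uF q k 0 := rfl
      rw [hs_eq]
      ring
    have hzzero : ∀ t : Fin k, d ≤ t.1 → zk q k d v t = 0 := by
      intro t ht
      unfold zk
      have h0 : (∑ j, if sig d j = t then v 0 j else 0) = y 0 t := rfl
      rw [h0, hy0 0 t ht, rv_zero d hd t ht]
      simp
    refine ⟨hznn, hzsum, hzzero, ?_⟩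
    intro i t
    rw [hvy i t, hyz (i+1) t, hsrec i]
    ring
  -- assemble
  refine ⟨niF k, M, hnimono, ⟨fun i => hp0 _, hpmono.comp hnimono, hqdvd,
    fun _ => hk2, ?_, ?_⟩, ?_⟩
  · intro n i j
    simp only [hM, Matrix.of_apply]
    split
    · have := Int.natCast_nonneg (aN q k n)
      omega
    · norm_num
  · intro n j
    rw [hcolsum n j]
    have h1 : (aN q k n + k) * q n = q (n+1) := by
      have h2 := k_le_m q k hq0 hqdvd hmge hk2 n
      have h3 : aN q k n + k = q (n+1) / q n := by
        unfold aN
        omega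
      rw [h3, Nat.div_mul_cancel (hqdvd n)]
    exact_mod_cast congrArg (Nat.cast : ℕ → ℤ) h1
  -- the affine homeomorphism
  · have hmemS : ∀ x : (simplexSet d 1 : Set (Fin d → ℝ)), (∑ t, x.1 t = 1) := by
      intro x
      have := x.2.2
      simpa using this
    refine ⟨⟨⟨fun x => ⟨vf q k d x.1 , fun i => hvfmem x.1 x.2.1 (hmemS x) i,
        fun i => hvfstep x.1 (hmemS x) i⟩,
      fun v => ⟨fun t => zk q k d v.1 ⟨t.1, lt_of_lt_of_le t.2 hkd⟩, ?_, ?_⟩,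
      ?_, ?_⟩, ?_, ?_⟩, ?_⟩
    · -- nonneg
      intro t
      exact (hback v.1 v.2.1 v.2.2).1 _
    · -- sum = 1
      obtain ⟨hz1, hz2, hz3, _⟩ := hback v.1 v.2.1 v.2.2
      have hext := extD_restrict hkd (zk q k d v.1) hz3
      have h1 : ∑ t : Fin d, zk q k d v.1 ⟨t.1, lt_of_lt_of_le t.2 hkd⟩
          = ∑ t : Fin k, zk q k d v.1 t := by
        rw [← sum_extD hkd, hext]
      simp only [h1, hz2]
      norm_num
    · -- left inverse
      intro x
      apply Subtype.ext
      funext t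
      show zk q k d (vf q k d x.1) ⟨t.1, lt_of_lt_of_le t.2 hkd⟩ = x.1 t
      unfold zk
      rw [hEvf x.1 0 ⟨t.1, lt_of_lt_of_le t.2 hkd⟩]
      have hx : extD d x.1 (⟨t.1, lt_of_lt_of_le t.2 hkd⟩ : Fin k) = x.1 t := by
        unfold extD
        rw [dif_pos t.2]
      rw [hx]
      field_simp
      rw [add_sub_cancel_right]
      exact mul_div_cancel_left₀ _ (ne_of_gt (hspos 0))
    · -- right inverse
      intro v
      apply Subtype.ext
      funext i t
      obtain ⟨hz1, hz2, hz3, hz4⟩ := hback v.1 v.2.1 v.2.2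
      have hext := extD_restrict hkd (zk q k d v.1) hz3
      show vf q k d (fun t : Fin d => zk q k d v.1 ⟨t.1, lt_of_lt_of_le t.2 hkd⟩) i t
        = v.1 i t
      unfold vf
      rw [hext, hz4 i t]
    · -- continuity of toFun
      apply Continuous.subtype_mk
      apply continuous_pi
      intro i
      apply continuous_pi
      intro t
      apply Continuous.add
      apply Continuous.add
      · apply Continuous.mul continuous_const
        by_cases h : t.1 < d
        · have he : (fun x : (simplexSet d 1 : Set (Fin d → ℝ)) => extD d x.1 t)
              = fun x => x.1 ⟨t.1, h⟩ := funext fun x => dif_pos h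
          rw [he]
          exact (continuous_apply _).comp continuous_subtype_val
        · have he : (fun x : (simplexSet d 1 : Set (Fin d → ℝ)) => extD d x.1 t)
              = fun _ => 0 := funext fun x => dif_neg h
          rw [he]
          exact continuous_const
      · exact continuous_const
      · exact continuous_const
    · -- continuity of invFun
      apply Continuous.subtype_mk
      apply continuous_pi
      intro t
      unfold zk
      apply Continuous.div_const
      apply Continuous.sub _ continuous_const
      apply continuous_finset_sum
      intro j _
      by_cases hc : sig d j = (⟨t.1, lt_of_lt_of_le t.2 hkd⟩ : Fin k)
      · simp only [if_pos hc]
        exact (continuous_apply j).comp ((continuous_apply 0).comp continuous_subtype_val)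
      · simp only [if_neg hc]
        exact continuous_const
    · -- affinity
      intro x y zp t ht0 ht1 hzp
      show vf q k d zp.1 = t • vf q k d x.1 + (1 - t) • vf q k d y.1
      funext i t'
      have hext : extD d zp.1 t' = t * extD d x.1 t' + (1-t) * extD d y.1 t' := by
        unfold extD
        split
        · rw [hzp]
          simp
        · ring
      simp only [Pi.add_apply, Pi.smul_apply, smul_eq_mul]
      unfold vf
      rw [hext]
      ring
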